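/- Let C be a symmetric monoidal category with a state dagger (an assignment ψ ↦ ψ♯ from states to effects satisfying: id_I♯ = id_I; (ψ ⊗ φ)♯ = ψ♯ ⊗ φ♯ up to unitors; ((id ⊗ φ♯) ∘ ψ)♯ = φ ∘ ψ♯ suitably bracketed; and (γ ∘ ψ)♯ = ψ♯ ∘ γ⁻¹ for coherence isomorphisms γ), and suppose every object has a state dagger dual, i.e. a dual whose cap equals (σ ∘ η)♯. Then the state dagger is injective: ψ♯ = φ♯ implies ψ = φ for states ψ, φ : I → A. -/

import Mathlib

open CategoryTheory MonoidalCategory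

/-- A state dagger on a symmetric monoidal category: an assignment of an effect
`ψ♯ : A ⟶ I` to each state `ψ : I ⟶ A`, compatible with the identity on `I`,
with tensoring (modulo unitors), with partial composition, and with the
coherence isomorphisms (associators, unitors, symmetry). -/
structure StateDagger (C : Type*) [Category C] [MonoidalCategory C] [SymmetricCategory C] where
  sharp : ∀ {A : C}, (𝟙_ C ⟶ A) → (A ⟶ 𝟙_ C)
  sharp_id : sharp (𝟙 (𝟙_ C)) = 𝟙 (𝟙_ C)
  sharp_tensor : ∀ {A B : C} (ψ : 𝟙_ C ⟶ A) (φ : 𝟙_ C ⟶ B),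
    sharp ((λ_ (𝟙_ C)).inv ≫ (ψ ⊗ₘ φ)) = (sharp ψ ⊗ₘ sharp φ) ≫ (λ_ (𝟙_ C)).hom
  sharp_partial : ∀ {A B : C} (ψ : 𝟙_ C ⟶ A ⊗ B) (φ : 𝟙_ C ⟶ B),
    sharp (ψ ≫ (𝟙 A ⊗ₘ sharp φ) ≫ (ρ_ A).hom) = (ρ_ A).inv ≫ (𝟙 A ⊗ₘ φ) ≫ sharp ψ
  sharp_assoc : ∀ {A B D : C} (ψ : 𝟙_ C ⟶ (A ⊗ B) ⊗ D),
    sharp (ψ ≫ (α_ A B D).hom) = (α_ A B D).inv ≫ sharp ψ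
  sharp_leftUnitor : ∀ {A : C} (ψ : 𝟙_ C ⟶ 𝟙_ C ⊗ A),
    sharp (ψ ≫ (λ_ A).hom) = (λ_ A).inv ≫ sharp ψ
  sharp_rightUnitor : ∀ {A : C} (ψ : 𝟙_ C ⟶ A ⊗ 𝟙_ C),
    sharp (ψ ≫ (ρ_ A).hom) = (ρ_ A).inv ≫ sharp ψ
  sharp_braiding : ∀ {A B : C} (ψ : 𝟙_ C ⟶ A ⊗ B),
    sharp (ψ ≫ (β_ A B).hom) = (β_ A B).inv ≫ sharp ψ

/-- If a symmetric monoidal category has a state dagger and every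
object has a state dagger dual (a dual whose cap equals `(σ ∘ η)♯`), then the
state dagger is injective on states. -/
theorem stmt_7 {C : Type*} [Category C] [MonoidalCategory C] [SymmetricCategory C]
    (S : StateDagger C) (dual : C → C)
    (η : ∀ A : C, 𝟙_ C ⟶ dual A ⊗ A) (ε : ∀ A : C, A ⊗ dual A ⟶ 𝟙_ C)
    (snake₁ : ∀ A : C,
      (ρ_ A).inv ≫ (𝟙 A ⊗ₘ η A) ≫ (α_ A (dual A) A).inv ≫ (ε A ⊗ₘ 𝟙 A) ≫ (λ_ A).hom = 𝟙 A)
    (snake₂ : ∀ A : C,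
      (λ_ (dual A)).inv ≫ (η A ⊗ₘ 𝟙 (dual A)) ≫ (α_ (dual A) A (dual A)).hom ≫
        (𝟙 (dual A) ⊗ₘ ε A) ≫ (ρ_ (dual A)).hom = 𝟙 (dual A))
    (hε : ∀ A : C, ε A = S.sharp (η A ≫ (β_ (dual A) A).hom))
    {A : C} (ψ φ : 𝟙_ C ⟶ A) (h : S.sharp ψ = S.sharp φ) : ψ = φ := by
  have hsharpη : S.sharp (η A) = (β_ (dual A) A).hom ≫ ε A := by
    rw [hε A, S.sharp_braiding (η A), Iso.hom_inv_id_assoc]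
  have heq : (ρ_ (dual A)).inv ≫ (𝟙 (dual A) ⊗ₘ ψ) ≫ S.sharp (η A) =
      (ρ_ (dual A)).inv ≫ (𝟙 (dual A) ⊗ₘ φ) ≫ S.sharp (η A) := by
    rw [← S.sharp_partial (η A) ψ, ← S.sharp_partial (η A) φ, h]
  have hrec : ∀ χ : 𝟙_ C ⟶ A,
      η A ≫ (((ρ_ (dual A)).inv ≫ (𝟙 (dual A) ⊗ₘ χ) ≫ S.sharp (η A)) ⊗ₘ 𝟙 A) ≫ (λ_ A).hom = χ := by
    intro χ
    rw [hsharpη]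
    calc η A ≫ (((ρ_ (dual A)).inv ≫ (𝟙 (dual A) ⊗ₘ χ) ≫ (β_ (dual A) A).hom ≫ ε A) ⊗ₘ 𝟙 A) ≫ (λ_ A).hom
        = χ ≫ ((ρ_ A).inv ≫ (𝟙 A ⊗ₘ η A) ≫ (α_ A (dual A) A).inv ≫ (ε A ⊗ₘ 𝟙 A) ≫ (λ_ A).hom) := by
          simp only [MonoidalCategory.tensorHom_def, comp_whiskerRight, Category.assoc, whisker_assoc]
          simp [← BraidedCategory.braiding_naturality_left_assoc,
            ← BraidedCategory.braiding_naturality_right_assoc]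
          slice_lhs 3 4 => rw [show (dual A) ◁ χ ▷ A ≫ (α_ (dual A) A A).inv =
            (α_ (dual A) (𝟙_ C) A).inv ≫ ((dual A) ◁ χ) ▷ A by simp]
          have hb : (β_ (dual A) (𝟙_ C)).hom = (ρ_ (dual A)).hom ≫ (λ_ (dual A)).inv := by
            rw [← braiding_leftUnitor (dual A)]; simp
          slice_lhs 4 5 => rw [← comp_whiskerRight, BraidedCategory.braiding_naturality_right,
            hb, comp_whiskerRight, comp_whiskerRight]
          slice_lhs 2 4 => rw [show (dual A) ◁ (λ_ A).inv ≫ (α_ (dual A) (𝟙_ C) A).inv ≫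
            (ρ_ (dual A)).hom ▷ A = 𝟙 _ by coherence]
          simp only [Category.id_comp, Category.assoc]
          have key : η A ≫ (λ_ (dual A)).inv ▷ A ≫ χ ▷ (dual A) ▷ A =
              χ ≫ (ρ_ A).inv ≫ A ◁ η A ≫ (α_ A (dual A) A).inv := by
            calc η A ≫ (λ_ (dual A)).inv ▷ A ≫ χ ▷ (dual A) ▷ A
                = η A ≫ (λ_ (dual A ⊗ A)).inv ≫ (α_ (𝟙_ C) (dual A) A).inv ≫
                    (χ ▷ (dual A)) ▷ A := by
                  rw [show (λ_ (dual A)).inv ▷ A =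
                    (λ_ (dual A ⊗ A)).inv ≫ (α_ (𝟙_ C) (dual A) A).inv by coherence]
                  simp
              _ = η A ≫ (λ_ (dual A ⊗ A)).inv ≫ χ ▷ (dual A ⊗ A) ≫ (α_ A (dual A) A).inv := by
                  rw [associator_inv_naturality_left]
              _ = (λ_ (𝟙_ C)).inv ≫ (𝟙_ C) ◁ η A ≫ χ ▷ (dual A ⊗ A) ≫ (α_ A (dual A) A).inv := by
                  rw [← leftUnitor_inv_naturality_assoc]
              _ = (λ_ (𝟙_ C)).inv ≫ χ ▷ (𝟙_ C) ≫ A ◁ η A ≫ (α_ A (dual A) A).inv := by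
                  rw [whisker_exchange_assoc]
              _ = χ ≫ (ρ_ A).inv ≫ A ◁ η A ≫ (α_ A (dual A) A).inv := by
                  rw [unitors_inv_equal, ← rightUnitor_inv_naturality_assoc]
          rw [reassoc_of% key]
      _ = χ := by rw [snake₁ A, Category.comp_id]
  rw [← hrec ψ, heq, hrec φ]
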